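/- arXiv:1408.1865 — 7 statements merged into one kernel-verified Lean document; each statement's English description precedes it below -/
import Mathlib

section
/- Let n and g be natural numbers and let a be an odd natural number with 3 ≤ a ≤ n − 2. Set k = (a+1)/2 and v = gcd(k−1, n) + gcd(k, n), and suppose n + 1 = 2g + v (the genus equation for the elementary tête-à-tête graph E_{n,a}). Then n ≤ 3g + 3. -/
/-- Bound `n ≤ 3g + 3` for the order of an elementary tête-à-tête twist
`E_{n,a}` of genus `g`, with `a` odd, `3 ≤ a ≤ n - 2`, `k = (a+1)/2`,
`v = gcd(k-1,n) + gcd(k,n)` and the genus equation `n + 1 = 2g + v`. -/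
theorem elementary_tat_order_le_three_g_add_three
    (n g a : ℕ) (ha : Odd a) (h3 : 3 ≤ a) (h2 : a ≤ n - 2)
    (hgen : n + 1 = 2 * g +
      (Nat.gcd ((a + 1) / 2 - 1) n + Nat.gcd ((a + 1) / 2) n)) :
    n ≤ 3 * g + 3 := by
  obtain ⟨j, hj⟩ := ha
  have hk : (a + 1) / 2 = j + 1 := by omega
  rw [hk] at hgen
  simp only [Nat.add_sub_cancel] at hgen
  set d := Nat.gcd j n with hd
  set e := Nat.gcd (j + 1) n with he
  have hn : 2 * j + 3 ≤ n := by omega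
  have hj1 : 1 ≤ j := by omega
  have hdj : d ≤ j := Nat.le_of_dvd (by omega) (Nat.gcd_dvd_left _ _)
  have hek : e ≤ j + 1 := Nat.le_of_dvd (by omega) (Nat.gcd_dvd_left _ _)
  have hdn : d ∣ n := Nat.gcd_dvd_right _ _
  have hen : e ∣ n := Nat.gcd_dvd_right _ _
  have hd1 : 1 ≤ d := Nat.gcd_pos_of_pos_right _ (by omega)
  have he1 : 1 ≤ e := Nat.gcd_pos_of_pos_right _ (by omega)
  have hcop : Nat.Coprime d e := by
    apply Nat.Coprime.coprime_dvd_left (Nat.gcd_dvd_left j n)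
    apply Nat.Coprime.coprime_dvd_right (Nat.gcd_dvd_left (j + 1) n)
    simp [Nat.Coprime]
  -- main bound: 3 * (d + e) ≤ n + 9
  have key : 3 * (d + e) ≤ n + 9 := by
    rcases eq_or_lt_of_le hd1 with hd1' | hd2
    · -- d = 1 : show 3 * e ≤ n
      obtain ⟨c, hc⟩ := hen
      have hc3 : 3 ≤ c := by
        rcases Nat.lt_or_ge c 3 with h | h
        · interval_cases c <;> omega
        · exact h
      have : 3 * e ≤ n := by
        calc 3 * e ≤ e * c := by nlinarith
        _ = n := hc.symm
      omega
    · rcases eq_or_lt_of_le he1 with he1' | he2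
      · -- e = 1 : show 3 * d ≤ n
        obtain ⟨c, hc⟩ := hdn
        have hc3 : 3 ≤ c := by
          rcases Nat.lt_or_ge c 3 with h | h
          · interval_cases c <;> omega
          · exact h
        have : 3 * d ≤ n := by
          calc 3 * d ≤ d * c := by nlinarith
          _ = n := hc.symm
        omega
      · -- d ≥ 2 and e ≥ 2
        have hmn : d * e ∣ n := Nat.Coprime.mul_dvd_of_dvd_of_dvd hcop hdn hen
        have hmle : d * e ≤ n := Nat.le_of_dvd (by omega) hmn
        rcases eq_or_lt_of_le hmle with hmeq | hmlt
        · -- d * e = n : then d ≥ 3 and e ≥ 3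
          have hd3 : 3 ≤ d := by
            rcases Nat.lt_or_ge d 3 with h | h
            · have hde : d = 2 := by omega
              rw [hde] at hmeq
              omega
            · exact h
          have he3 : 3 ≤ e := by
            rcases Nat.lt_or_ge e 3 with h | h
            · have hee : e = 2 := by omega
              rw [hee, Nat.mul_comm] at hmeq
              omega
            · exact h
          obtain ⟨d', hd'⟩ := Nat.exists_eq_add_of_le hd3
          obtain ⟨e', he'⟩ := Nat.exists_eq_add_of_le he3
          have hx : n = 9 + 3 * d' + 3 * e' + d' * e' := by
            rw [← hmeq, hd', he']; ring
          omega
        · -- d * e < n : then 2 * (d * e) ≤ n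
          obtain ⟨c, hc⟩ := hmn
          have hc2 : 2 ≤ c := by
            rcases Nat.lt_or_ge c 2 with h | h
            · interval_cases c <;> omega
            · exact h
          have h2m : 2 * (d * e) ≤ n := by
            calc 2 * (d * e) ≤ (d * e) * c := by nlinarith
            _ = n := hc.symm
          obtain ⟨d', hd'⟩ := Nat.exists_eq_add_of_le hd2
          obtain ⟨e', he'⟩ := Nat.exists_eq_add_of_le he2
          have hx : d * e = 4 + 2 * d' + 2 * e' + d' * e' := by
            rw [hd', he']; ring
          omega
  omega
end

section
/- Let n and g be natural numbers and let a be an odd natural number with 3 ≤ a ≤ n − 2. Set k = (a+1)/2 and v = gcd(k−1, n) + gcd(k, n), and suppose n + 1 = 2g + v. If g ≡ 2 (mod 3), then n ≤ 3g. -/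
lemma tat_aux (n g t d1 d2 : ℕ) (ht : 1 ≤ t) (hkn : 2 * t + 3 ≤ n)
    (hd1t : d1 ∣ t) (hd2k : d2 ∣ t + 1) (hd1n : d1 ∣ n) (hd2n : d2 ∣ n)
    (hgen : n + 1 = 2 * g + (d1 + d2)) (hg : g % 3 = 2) (hlt : 3 * g < n) :
    False := by
  have hd1le : d1 ≤ t := Nat.le_of_dvd (by omega) hd1t
  have hd2le : d2 ≤ t + 1 := Nat.le_of_dvd (by omega) hd2k
  have hb1 : 2 * d1 + 3 ≤ n := by omega
  have hb2 : 2 * d2 + 1 ≤ n := by omega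
  have hcoptt : Nat.Coprime t (t + 1) := by
    simp [Nat.Coprime, Nat.gcd_self_add_right]
  have hcop : Nat.Coprime d1 d2 :=
    Nat.Coprime.coprime_dvd_right hd2k (Nat.Coprime.coprime_dvd_left hd1t hcoptt)
  have hd1pos : 0 < d1 := Nat.pos_of_dvd_of_pos hd1t (by omega)
  have hd2pos : 0 < d2 := Nat.pos_of_dvd_of_pos hd2k (by omega)
  obtain ⟨x, rfl⟩ : ∃ x, d1 = x + 1 := ⟨d1 - 1, by omega⟩
  obtain ⟨y, rfl⟩ : ∃ y, d2 = y + 1 := ⟨d2 - 1, by omega⟩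
  have hmul : (x + 1) * (y + 1) ∣ n := hcop.mul_dvd_of_dvd_of_dvd hd1n hd2n
  obtain ⟨m, hnm⟩ := hmul
  obtain ⟨P, hP⟩ : ∃ P, P = x * y := ⟨_, rfl⟩
  rcases m with _ | _ | _ | m
  · -- m = 0
    have hn0 : n = 0 := by rw [hnm]; ring
    omega
  · -- m = 1
    have hn : n = P + x + y + 1 := by rw [hnm, hP]; ring
    have hmod : P % 3 = (x % 3) * (y % 3) % 3 := by rw [hP, Nat.mul_mod]
    have hx3 : x % 3 = 0 ∨ x % 3 = 1 ∨ x % 3 = 2 := by omega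
    have hy3 : y % 3 = 0 ∨ y % 3 = 1 ∨ y % 3 = 2 := by omega
    rcases hx3 with hx | hx | hx <;> rcases hy3 with hy | hy | hy <;>
        rw [hx, hy] at hmod <;> norm_num at hmod <;> try omega
    · -- x % 3 = 1, y % 3 = 1
      have hx' : x = 1 ∨ x = 4 ∨ 7 ≤ x := by omega
      have hy' : y = 1 ∨ y = 4 ∨ 7 ≤ y := by omega
      rcases hx' with rfl | rfl | hx7
      · omega
      · rcases hy' with rfl | rfl | hy7
        · omega
        · exact absurd hcop (by decide)
        · omega
      · rcases hy' with rfl | rfl | hy7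
        · omega
        · omega
        · have h1 : 7 * y ≤ P := by rw [hP]; exact Nat.mul_le_mul hx7 le_rfl
          have h2 : x * 7 ≤ P := by rw [hP]; exact Nat.mul_le_mul le_rfl hy7
          omega
    · -- x % 3 = 2, y % 3 = 2
      have h3 : (3 : ℕ) ∣ Nat.gcd (x + 1) (y + 1) :=
        Nat.dvd_gcd (by omega) (by omega)
      rw [Nat.Coprime] at hcop
      omega
  · -- m = 2
    have hn : n = 2 * P + 2 * x + 2 * y + 2 := by rw [hnm, hP]; ring
    rcases Nat.eq_zero_or_pos x with rfl | hx
    · have hP' : P = 0 := by omega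
      omega
    rcases Nat.eq_zero_or_pos y with rfl | hy
    · have hP' : P = 0 := by rw [hP]; ring
      omega
    rcases eq_or_lt_of_le (show 1 ≤ x from hx) with hx1 | hx2
    · have : x = 1 := by omega
      subst this
      have hP' : P = y := by omega
      omega
    rcases eq_or_lt_of_le (show 1 ≤ y from hy) with hy1 | hy2
    · have : y = 1 := by omega
      subst this
      have hP' : P = x := by rw [hP]; ring
      omega
    have h1 : 2 * y ≤ P := by rw [hP]; exact Nat.mul_le_mul hx2 le_rfl
    have h2 : x * 2 ≤ P := by rw [hP]; exact Nat.mul_le_mul le_rfl hy2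
    omega
  · -- m ≥ 3
    have h3n : 3 * (P + x + y + 1) ≤ n := by
      rw [hnm, hP]
      calc 3 * (x * y + x + y + 1) = (x + 1) * (y + 1) * 3 := by ring
        _ ≤ (x + 1) * (y + 1) * (m + 1 + 1 + 1) :=
            Nat.mul_le_mul le_rfl (by omega)
    omega

/-- Bound `n ≤ 3g` when `g ≡ 2 (mod 3)` for the order of an elementary
tête-à-tête twist `E_{n,a}` of genus `g`. -/
theorem elementary_tat_order_le_three_g_of_mod_three_eq_two
    (n g a : ℕ) (ha : Odd a) (h3 : 3 ≤ a) (h2 : a ≤ n - 2)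
    (hgen : n + 1 = 2 * g +
      (Nat.gcd ((a + 1) / 2 - 1) n + Nat.gcd ((a + 1) / 2) n))
    (hg : g % 3 = 2) :
    n ≤ 3 * g := by
  by_contra hlt
  push_neg at hlt
  obtain ⟨t, rfl⟩ := ha
  have hk : (2 * t + 1 + 1) / 2 = t + 1 := by omega
  rw [hk] at hgen
  simp only [Nat.add_sub_cancel] at hgen
  exact tat_aux n g t _ _ (by omega) (by omega)
    (Nat.gcd_dvd_left t n) (Nat.gcd_dvd_left (t + 1) n)
    (Nat.gcd_dvd_right t n) (Nat.gcd_dvd_right (t + 1) n) hgen hg hlt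
end

section
/- For every natural number g ≥ 4, there exist a natural number n and an odd natural number a with 3 ≤ a ≤ n − 2 such that, setting k = (a+1)/2 and v = gcd(k−1, n) + gcd(k, n), one has n + 1 = 2g + v, and moreover n = 3g + 3 if g ≡ 0 or 1 (mod 3), while n = 3g if g ≡ 2 (mod 3). Explicitly one may take (n, a) = (3g+3, 2g+1) if g ≡ 0 (mod 3), (n, a) = (3g+3, 2g+3) if g ≡ 1 (mod 3), and (n, a) = (3g, 2g−1) if g ≡ 2 (mod 3). -/
lemma gcd_self_mul_add (m c d : ℕ) : Nat.gcd m (c + d * m) = Nat.gcd m c := by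
  simpa using Nat.gcd_add_mul_right_right m c d

/-- Sharpness of the bounds: for every `g ≥ 4` there is an elementary
tête-à-tête graph `E_{n,a}` of genus `g` with `n = 3g + 3` (if `g ≡ 0, 1 mod 3`)
respectively `n = 3g` (if `g ≡ 2 mod 3`); explicitly, one may take
`(n,a) = (3g+3, 2g+1)`, `(3g+3, 2g+3)`, `(3g, 2g-1)` in the three cases. -/
theorem elementary_tat_order_bounds_sharp (g : ℕ) (hg : 4 ≤ g) :
    ∃ n a : ℕ, Odd a ∧ 3 ≤ a ∧ a ≤ n - 2 ∧
      n + 1 = 2 * g +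
        (Nat.gcd ((a + 1) / 2 - 1) n + Nat.gcd ((a + 1) / 2) n) ∧
      (g % 3 = 0 → n = 3 * g + 3 ∧ a = 2 * g + 1) ∧
      (g % 3 = 1 → n = 3 * g + 3 ∧ a = 2 * g + 3) ∧
      (g % 3 = 2 → n = 3 * g ∧ a = 2 * g - 1) := by
  have h3 := Nat.mod_lt g (show 0 < 3 by norm_num)
  interval_cases h : g % 3
  · -- g ≡ 0 : n = 3g+3, a = 2g+1
    obtain ⟨m, hm⟩ : ∃ m, g = 3 * m := ⟨g / 3, by omega⟩
    refine ⟨3 * g + 3, 2 * g + 1, ⟨g, by ring⟩, by omega, by omega, ?_,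
      fun _ => ⟨rfl, rfl⟩, by omega, by omega⟩
    have hk : (2 * g + 1 + 1) / 2 = g + 1 := by omega
    rw [hk, Nat.add_sub_cancel]
    have h1 : Nat.gcd g (3 * g + 3) = 3 := by
      subst hm
      rw [show 3 * (3 * m) + 3 = 3 * (3 * m + 1) by ring, Nat.gcd_mul_left,
        show 3 * m + 1 = 1 + 3 * m by ring, gcd_self_mul_add, Nat.gcd_one_right]
    have h2 : Nat.gcd (g + 1) (3 * g + 3) = g + 1 :=
      Nat.gcd_eq_left ⟨3, by ring⟩
    rw [h1, h2]; omega
  · -- g ≡ 1 : n = 3g+3, a = 2g+3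
    obtain ⟨m, hm⟩ : ∃ m, g = 3 * m + 1 := ⟨g / 3, by omega⟩
    refine ⟨3 * g + 3, 2 * g + 3, ⟨g + 1, by ring⟩, by omega, by omega, ?_,
      by omega, fun _ => ⟨rfl, rfl⟩, by omega⟩
    have hk : (2 * g + 3 + 1) / 2 = g + 2 := by omega
    rw [hk, show g + 2 - 1 = g + 1 by omega]
    have h1 : Nat.gcd (g + 1) (3 * g + 3) = g + 1 :=
      Nat.gcd_eq_left ⟨3, by ring⟩
    have h2 : Nat.gcd (g + 2) (3 * g + 3) = 3 := by
      subst hm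
      rw [show 3 * m + 1 + 2 = 3 * (m + 1) by ring,
        show 3 * (3 * m + 1) + 3 = 3 * (3 * m + 2) by ring, Nat.gcd_mul_left,
        show 3 * m + 2 = m + 2 * (m + 1) by ring, gcd_self_mul_add,
        show m + 1 = 1 + 1 * m by ring, Nat.gcd_comm, gcd_self_mul_add,
        Nat.gcd_one_right]
    rw [h1, h2]; omega
  · -- g ≡ 2 : n = 3g, a = 2g-1
    obtain ⟨m, hm⟩ : ∃ m, g = 3 * m + 2 := ⟨g / 3, by omega⟩
    refine ⟨3 * g, 2 * g - 1, ⟨g - 1, by omega⟩, by omega, by omega, ?_,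
      by omega, by omega, fun _ => ⟨rfl, rfl⟩⟩
    have hk : (2 * g - 1 + 1) / 2 = g := by omega
    rw [hk]
    have h1 : Nat.gcd (g - 1) (3 * g) = 1 := by
      subst hm
      rw [show 3 * m + 2 - 1 = 3 * m + 1 by omega,
        show 3 * (3 * m + 2) = 3 + 3 * (3 * m + 1) by ring,
        gcd_self_mul_add, Nat.gcd_comm,
        show 3 * m + 1 = 1 + m * 3 by ring, gcd_self_mul_add,
        Nat.gcd_one_right]
    have h2 : Nat.gcd g (3 * g) = g := Nat.gcd_eq_left ⟨3, by ring⟩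
    rw [h1, h2]; omega
end

section
/- Let g ≥ 4 be a natural number, and let n be a natural number and a an odd natural number with 3 ≤ a ≤ n − 2 such that, with k = (a+1)/2 and v = gcd(k−1, n) + gcd(k, n), one has n + 1 = 2g + v. If g ≡ 0 (mod 3) and n = 3g + 3, then a = 2g + 1; if g ≡ 1 (mod 3) and n = 3g + 3, then a = 2g + 3; and if g ≡ 2 (mod 3) and n = 3g, then a = 2g − 1. -/
private lemma tat_aux1 (g x y : ℕ) (hg : 4 ≤ g) (hxy : x + y = g + 4)
    (hx1 : 1 ≤ x) (hxle : x ≤ y) (hdvd : x * y ∣ 3 * g + 3) :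
    x = 3 ∧ y = g + 1 := by
  have hle : x * y ≤ 3 * g + 3 := Nat.le_of_dvd (by omega) hdvd
  have hx3 : x ≤ 3 := by
    by_contra h
    push_neg at h
    have h4 : (4:ℤ) ≤ (x:ℤ) := by exact_mod_cast h
    have hxy' : (x:ℤ) + y = g + 4 := by exact_mod_cast hxy
    have hxle' : (x:ℤ) ≤ y := by exact_mod_cast hxle
    have hle' : (x:ℤ) * y ≤ 3 * g + 3 := by exact_mod_cast hle
    have hg' : (4:ℤ) ≤ (g:ℤ) := by exact_mod_cast hg
    nlinarith [mul_nonneg (by linarith : (0:ℤ) ≤ (x:ℤ) - 4)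
      (by linarith : (0:ℤ) ≤ (y:ℤ) - 4)]
  interval_cases x
  · exfalso
    have hy : y = g + 3 := by omega
    have h1 : y ∣ 3 * g + 3 := by simpa using hdvd
    have h2 : y ∣ 3 * y := Dvd.intro 3 (by ring)
    have h6 : y ∣ 6 := by
      have h := Nat.dvd_sub h2 h1
      have he : 3 * y - (3 * g + 3) = 6 := by omega
      rwa [he] at h
    have := Nat.le_of_dvd (by norm_num) h6
    omega
  · exfalso
    have hy : y = g + 2 := by omega
    have h1 : y ∣ 3 * g + 3 := (dvd_mul_left y 2).trans hdvd
    have h2 : y ∣ 3 * y := Dvd.intro 3 (by ring)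
    have h6 : y ∣ 3 := by
      have h := Nat.dvd_sub h2 h1
      have he : 3 * y - (3 * g + 3) = 3 := by omega
      rwa [he] at h
    have := Nat.le_of_dvd (by norm_num) h6
    omega
  · exact ⟨rfl, by omega⟩

private lemma tat_aux3 (g x y : ℕ) (hg : 4 ≤ g) (hmod : g % 3 = 2)
    (hxy : x + y = g + 1) (hx1 : 1 ≤ x) (hxle : x ≤ y)
    (hdvd : x * y ∣ 3 * g) :
    x = 1 ∧ y = g := by
  have hle : x * y ≤ 3 * g := Nat.le_of_dvd (by omega) hdvd
  have hx3 : x ≤ 3 := by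
    by_contra h
    push_neg at h
    have hg12 : g ≤ 12 := by
      by_contra hG
      push_neg at hG
      have h4 : (4:ℤ) ≤ (x:ℤ) := by exact_mod_cast h
      have hxy' : (x:ℤ) + y = g + 1 := by exact_mod_cast hxy
      have hxle' : (x:ℤ) ≤ y := by exact_mod_cast hxle
      have hle' : (x:ℤ) * y ≤ 3 * g := by exact_mod_cast hle
      have hg' : (13:ℤ) ≤ (g:ℤ) := by exact_mod_cast hG
      nlinarith [mul_nonneg (by linarith : (0:ℤ) ≤ (x:ℤ) - 4)
        (by linarith : (0:ℤ) ≤ (y:ℤ) - 4)]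
    have hxub : x ≤ g + 1 := by omega
    have hyub : y ≤ g + 1 := by omega
    have hylb : 1 ≤ y := by omega
    interval_cases g <;> interval_cases x <;> interval_cases y <;> omega
  interval_cases x
  · exact ⟨rfl, by omega⟩
  · exfalso
    have hy : y = g - 1 := by omega
    have h1 : y ∣ 3 * g := (dvd_mul_left y 2).trans hdvd
    have h2 : y ∣ 3 * y := Dvd.intro 3 (by ring)
    have h6 : y ∣ 3 := by
      have h := Nat.dvd_sub h1 h2
      have he : 3 * g - 3 * y = 3 := by omega
      rwa [he] at h
    have := Nat.le_of_dvd (by norm_num) h6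
    omega
  · exfalso
    have hy : y = g - 2 := by omega
    have h1 : y ∣ 3 * g := (dvd_mul_left y 3).trans hdvd
    have h2 : y ∣ 3 * y := Dvd.intro 3 (by ring)
    have h6 : y ∣ 6 := by
      have h := Nat.dvd_sub h1 h2
      have he : 3 * g - 3 * y = 6 := by omega
      rwa [he] at h
    have hy6 := Nat.le_of_dvd (by norm_num) h6
    have hg8 : g ≤ 8 := by omega
    interval_cases g <;> interval_cases y <;> omega

/-- Uniqueness, for `g ≥ 4`, of the elementary tête-à-tête graph `E_{n,a}` of
genus `g` realizing the maximal order `n`. -/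
theorem elementary_tat_maximal_order_unique
    (g n a : ℕ) (hg : 4 ≤ g) (ha : Odd a) (h3 : 3 ≤ a) (h2 : a ≤ n - 2)
    (hgen : n + 1 = 2 * g +
      (Nat.gcd ((a + 1) / 2 - 1) n + Nat.gcd ((a + 1) / 2) n)) :
    (g % 3 = 0 → n = 3 * g + 3 → a = 2 * g + 1) ∧
    (g % 3 = 1 → n = 3 * g + 3 → a = 2 * g + 3) ∧
    (g % 3 = 2 → n = 3 * g → a = 2 * g - 1) := by
  obtain ⟨m, rfl⟩ := ha
  have hm1 : 1 ≤ m := by omega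
  have hk : (2 * m + 1 + 1) / 2 = m + 1 := by omega
  rw [hk] at hgen
  simp only [Nat.add_sub_cancel] at hgen
  have hd1m : Nat.gcd m n ∣ m := Nat.gcd_dvd_left _ _
  have hd1n : Nat.gcd m n ∣ n := Nat.gcd_dvd_right _ _
  have hd2m : Nat.gcd (m + 1) n ∣ m + 1 := Nat.gcd_dvd_left _ _
  have hd2n : Nat.gcd (m + 1) n ∣ n := Nat.gcd_dvd_right _ _
  have hcopm : Nat.Coprime m (m + 1) := Nat.coprime_self_add_right.mpr (Nat.coprime_one_right m)
  have hcop : Nat.Coprime (Nat.gcd m n) (Nat.gcd (m + 1) n) :=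
    Nat.Coprime.coprime_dvd_left hd1m (Nat.Coprime.coprime_dvd_right hd2m hcopm)
  have hprod : Nat.gcd m n * Nat.gcd (m + 1) n ∣ n :=
    hcop.mul_dvd_of_dvd_of_dvd hd1n hd2n
  refine ⟨?_, ?_, ?_⟩
  · intro hmod hn
    subst hn
    have hd1pos : 0 < Nat.gcd m (3 * g + 3) := Nat.gcd_pos_of_pos_right _ (by omega)
    have hd2pos : 0 < Nat.gcd (m + 1) (3 * g + 3) := Nat.gcd_pos_of_pos_right _ (by omega)
    have hsum : Nat.gcd m (3 * g + 3) + Nat.gcd (m + 1) (3 * g + 3) = g + 4 := by omega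
    rcases le_or_gt (Nat.gcd m (3 * g + 3)) (Nat.gcd (m + 1) (3 * g + 3)) with hle | hlt
    · obtain ⟨hx, hy⟩ := tat_aux1 g _ _ hg hsum hd1pos hle hprod
      rw [hy] at hd2m
      obtain ⟨c, hc⟩ := hd2m
      rcases c with _ | _ | c
      · omega
      · omega
      · exfalso
        have : (g + 1) * 2 ≤ (g + 1) * (c + 1 + 1) := Nat.mul_le_mul_left _ (by omega)
        omega
    · obtain ⟨hx, hy⟩ := tat_aux1 g _ _ hg (by omega) hd2pos hlt.le
        (by rwa [Nat.mul_comm] at hprod)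
      rw [hy] at hd1m
      obtain ⟨c, hc⟩ := hd1m
      rcases c with _ | _ | c
      · omega
      · rw [hx] at hd2m
        omega
      · exfalso
        have : (g + 1) * 2 ≤ (g + 1) * (c + 1 + 1) := Nat.mul_le_mul_left _ (by omega)
        omega
  · intro hmod hn
    subst hn
    have hd1pos : 0 < Nat.gcd m (3 * g + 3) := Nat.gcd_pos_of_pos_right _ (by omega)
    have hd2pos : 0 < Nat.gcd (m + 1) (3 * g + 3) := Nat.gcd_pos_of_pos_right _ (by omega)
    have hsum : Nat.gcd m (3 * g + 3) + Nat.gcd (m + 1) (3 * g + 3) = g + 4 := by omega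
    rcases le_or_gt (Nat.gcd m (3 * g + 3)) (Nat.gcd (m + 1) (3 * g + 3)) with hle | hlt
    · obtain ⟨hx, hy⟩ := tat_aux1 g _ _ hg hsum hd1pos hle hprod
      rw [hy] at hd2m
      obtain ⟨c, hc⟩ := hd2m
      rcases c with _ | _ | c
      · omega
      · rw [hx] at hd1m
        omega
      · exfalso
        have : (g + 1) * 2 ≤ (g + 1) * (c + 1 + 1) := Nat.mul_le_mul_left _ (by omega)
        omega
    · obtain ⟨hx, hy⟩ := tat_aux1 g _ _ hg (by omega) hd2pos hlt.le
        (by rwa [Nat.mul_comm] at hprod)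
      rw [hy] at hd1m
      obtain ⟨c, hc⟩ := hd1m
      rcases c with _ | _ | c
      · omega
      · omega
      · exfalso
        have : (g + 1) * 2 ≤ (g + 1) * (c + 1 + 1) := Nat.mul_le_mul_left _ (by omega)
        omega
  · intro hmod hn
    subst hn
    have hd1pos : 0 < Nat.gcd m (3 * g) := Nat.gcd_pos_of_pos_right _ (by omega)
    have hd2pos : 0 < Nat.gcd (m + 1) (3 * g) := Nat.gcd_pos_of_pos_right _ (by omega)
    have hsum : Nat.gcd m (3 * g) + Nat.gcd (m + 1) (3 * g) = g + 1 := by omega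
    rcases le_or_gt (Nat.gcd m (3 * g)) (Nat.gcd (m + 1) (3 * g)) with hle | hlt
    · obtain ⟨hx, hy⟩ := tat_aux3 g _ _ hg hmod hsum hd1pos hle hprod
      rw [hy] at hd2m
      obtain ⟨c, hc⟩ := hd2m
      rcases c with _ | _ | c
      · omega
      · omega
      · exfalso
        have : g * 2 ≤ g * (c + 1 + 1) := Nat.mul_le_mul_left _ (by omega)
        omega
    · obtain ⟨hx, hy⟩ := tat_aux3 g _ _ hg hmod (by omega) hd2pos hlt.le
        (by rwa [Nat.mul_comm] at hprod)
      rw [hy] at hd1m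
      obtain ⟨c, hc⟩ := hd1m
      rcases c with _ | _ | c
      · omega
      · exfalso
        have h3d : (3:ℕ) ∣ Nat.gcd (m + 1) (3 * g) :=
          Nat.dvd_gcd (by omega) (by omega)
        omega
      · exfalso
        have : g * 2 ≤ g * (c + 1 + 1) := Nat.mul_le_mul_left _ (by omega)
        omega
end

section
/- Let n and k be natural numbers with 2 ≤ k and 2k + 1 ≤ n. Then 3·(gcd(k−1, n) + gcd(k, n)) ≤ n + 9. -/
lemma small_divisor_aux (a n : ℕ) (h : a ∣ n) (h2 : 2 * a + 1 ≤ n) : 3 * a ≤ n := by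
  obtain ⟨m, rfl⟩ := h
  rcases Nat.lt_or_ge m 3 with hm | hm
  · interval_cases m <;> omega
  · nlinarith

/-- The main estimate: for `2 ≤ k` and `2k + 1 ≤ n`,
`3 * (gcd(k-1, n) + gcd(k, n)) ≤ n + 9`. -/
theorem three_mul_gcd_add_gcd_le (n k : ℕ) (hk : 2 ≤ k) (hn : 2 * k + 1 ≤ n) :
    3 * (Nat.gcd (k - 1) n + Nat.gcd k n) ≤ n + 9 := by
  set d := Nat.gcd (k - 1) n with hd
  set e := Nat.gcd k n with he
  have hkpos : 0 < k := by omega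
  have hk1 : 0 < k - 1 := by omega
  have hdn : d ∣ n := Nat.gcd_dvd_right _ _
  have hen : e ∣ n := Nat.gcd_dvd_right _ _
  have hdk : d ≤ k - 1 := Nat.le_of_dvd hk1 (Nat.gcd_dvd_left _ _)
  have hek : e ≤ k := Nat.le_of_dvd hkpos (Nat.gcd_dvd_left _ _)
  have h3d : 3 * d ≤ n := small_divisor_aux d n hdn (by omega)
  have h3e : 3 * e ≤ n := small_divisor_aux e n hen (by omega)
  have hck : Nat.Coprime (k - 1) k := by
    rw [show k = (k - 1) + 1 from by omega]
    exact Nat.coprime_self_add_right.mpr (Nat.coprime_one_right _)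
  have hcop : Nat.Coprime d e :=
    Nat.Coprime.coprime_dvd_left (Nat.gcd_dvd_left _ _)
      (Nat.Coprime.coprime_dvd_right (Nat.gcd_dvd_left _ _) hck)
  have hde : d * e ∣ n := Nat.Coprime.mul_dvd_of_dvd_of_dvd hcop hdn hen
  by_cases hcase : 3 ≤ d ∧ 3 ≤ e
  · obtain ⟨hd3, he3⟩ := hcase
    have hnpos : 0 < n := by omega
    have hden : d * e ≤ n := Nat.le_of_dvd hnpos hde
    obtain ⟨d', hd'⟩ := Nat.exists_eq_add_of_le hd3
    obtain ⟨e', he'⟩ := Nat.exists_eq_add_of_le he3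
    nlinarith [hd', he', hden]
  · omega
end

section
/- Let n ≥ 1 and let σ be a map from ZMod (2n) to itself satisfying σ ∘ σ = id and σ(x + 2) = σ(x) + 2 for all x, and suppose that the image of σ(0) under the natural ring homomorphism ZMod (2n) → ZMod 2 equals 1 (i.e., σ(0) is odd). Set a = σ(0). Then for every x ∈ ZMod (2n): if x maps to 0 in ZMod 2 then σ(x) = x + a, and if x maps to 1 in ZMod 2 then σ(x) = x − a. -/
/-- Classification of elementary tête-à-tête chord diagrams with walk
length 2: if `σ` is an involution of `ZMod (2n)` commuting with rotation by
two steps and `a = σ 0` is odd, then `σ x = x + a` for even `x` and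
`σ x = x - a` for odd `x`. -/
theorem chord_diagram_rotation_two_classification
    (n : ℕ) (hn : 1 ≤ n) (σ : ZMod (2 * n) → ZMod (2 * n))
    (hinv : ∀ x, σ (σ x) = x)
    (hrot : ∀ x, σ (x + 2) = σ x + 2)
    (hodd : ZMod.castHom (dvd_mul_right 2 n) (ZMod 2) (σ 0) = 1) :
    ∀ x : ZMod (2 * n),
      (ZMod.castHom (dvd_mul_right 2 n) (ZMod 2) x = 0 → σ x = x + σ 0) ∧
      (ZMod.castHom (dvd_mul_right 2 n) (ZMod 2) x = 1 → σ x = x - σ 0) := by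
  haveI : NeZero (2 * n) := ⟨by omega⟩
  have hstep : ∀ k : ℕ, σ ((2 * k : ℕ) : ZMod (2 * n)) = ((2 * k : ℕ) : ZMod (2 * n)) + σ 0 := by
    intro k
    induction k with
    | zero => simp
    | succ k ih =>
        have : ((2 * (k + 1) : ℕ) : ZMod (2 * n)) = ((2 * k : ℕ) : ZMod (2 * n)) + 2 := by
          push_cast; ring
        rw [this, hrot, ih]; ring
  have heven : ∀ x : ZMod (2 * n),
      ZMod.castHom (dvd_mul_right 2 n) (ZMod 2) x = 0 → σ x = x + σ 0 := by
    intro x hx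
    obtain ⟨m, rfl⟩ := ZMod.natCast_zmod_surjective x
    have h2 : (2 : ℕ) ∣ m := by
      have : ((m : ZMod 2)) = 0 := by simpa using hx
      exact (ZMod.natCast_eq_zero_iff m 2).mp this
    obtain ⟨k, rfl⟩ := h2
    exact hstep k
  intro x
  refine ⟨heven x, fun hx => ?_⟩
  have h0 : ZMod.castHom (dvd_mul_right 2 n) (ZMod 2) (x - σ 0) = 0 := by
    rw [map_sub, hx, hodd, sub_self]
  have := heven (x - σ 0) h0
  rw [sub_add_cancel] at this
  calc σ x = σ (σ (x - σ 0)) := by rw [this]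
    _ = x - σ 0 := hinv _
end

section
/- There do not exist a matrix A in SL(2, ℤ) and an integer k ≥ 2 such that A^k equals the matrix [[1, 1], [0, 1]]. In other words, the matrix [[1, 1], [0, 1]] has no roots in SL(2, ℤ). -/
private lemma dehn_aux (a b : ℤ) (h : a * a = 1) (n : ℕ) :
    !![a, b; 0, a] ^ n = !![a ^ n, (n : ℤ) * a ^ (n + 1) * b; 0, a ^ n] := by
  have ha : a = 1 ∨ a = -1 := mul_self_eq_one_iff.mp h
  induction n with
  | zero => simp [Matrix.one_fin_two]
  | succ n ih =>
    rw [pow_succ, ih]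
    ext i j
    rcases ha with ha | ha <;> subst ha <;> fin_cases i <;> fin_cases j <;>
      simp [Matrix.mul_apply, Fin.sum_univ_succ] <;> ring

/-- The matrix `[[1, 1], [0, 1]]` has no roots in `SL(2, ℤ)`: Dehn twists on
the torus have no roots. -/
theorem dehn_twist_matrix_has_no_roots :
    ¬ ∃ (A : Matrix.SpecialLinearGroup (Fin 2) ℤ) (k : ℤ), 2 ≤ k ∧
      A ^ k = (⟨!![1, 1; 0, 1], by simp [Matrix.det_fin_two_of]⟩ :
        Matrix.SpecialLinearGroup (Fin 2) ℤ) := by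
  rintro ⟨A, k, hk2, hk⟩
  set T : Matrix.SpecialLinearGroup (Fin 2) ℤ :=
    (⟨!![1, 1; 0, 1], by simp [Matrix.det_fin_two_of]⟩ :
      Matrix.SpecialLinearGroup (Fin 2) ℤ) with hT
  -- A commutes with T = A^k
  have hcomm : A * T = T * A := by
    rw [← hk]; exact (Commute.self_zpow A k).eq
  have hcoe : (A : Matrix (Fin 2) (Fin 2) ℤ) * !![1, 1; 0, 1]
      = !![1, 1; 0, 1] * (A : Matrix (Fin 2) (Fin 2) ℤ) := by
    have := congrArg (Subtype.val) hcomm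
    exact this
  set a : ℤ := (A : Matrix (Fin 2) (Fin 2) ℤ) 0 0 with ha
  set b : ℤ := (A : Matrix (Fin 2) (Fin 2) ℤ) 0 1 with hb
  set c : ℤ := (A : Matrix (Fin 2) (Fin 2) ℤ) 1 0 with hc
  set d : ℤ := (A : Matrix (Fin 2) (Fin 2) ℤ) 1 1 with hd
  have heta : (A : Matrix (Fin 2) (Fin 2) ℤ) = !![a, b; c, d] :=
    Matrix.eta_fin_two _
  rw [heta] at hcoe
  have hc0 : c = 0 := by
    have := congrFun (congrFun hcoe 0) 0
    simp [Matrix.mul_apply, Fin.sum_univ_succ] at this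
    linarith
  have had : d = a := by
    have := congrFun (congrFun hcoe 0) 1
    simp [Matrix.mul_apply, Fin.sum_univ_succ] at this
    linarith
  have hdet : a * a = 1 := by
    have := A.2
    rw [heta, Matrix.det_fin_two_of] at this
    rw [hc0, had] at this
    linarith
  have hM : (A : Matrix (Fin 2) (Fin 2) ℤ) = !![a, b; 0, a] := by
    rw [heta, hc0, had]
  have claim : ∀ m : ℕ, (A : Matrix (Fin 2) (Fin 2) ℤ) ^ m
      = !![a ^ m, (m : ℤ) * a ^ (m + 1) * b; 0, a ^ m] := by
    intro m; rw [hM]; exact dehn_aux a b hdet m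
  -- turn zpow into pow
  set n : ℕ := k.toNat with hn
  have hkn : (n : ℤ) = k := Int.toNat_of_nonneg (by linarith)
  have hpow : A ^ n = T := by
    rw [← hk, ← hkn, zpow_natCast]
  have hpow' : (A : Matrix (Fin 2) (Fin 2) ℤ) ^ n = !![1, 1; 0, 1] := by
    have := congrArg (Subtype.val) hpow
    simpa [hT] using this
  rw [claim n] at hpow'
  have h01 : (n : ℤ) * a ^ (n + 1) * b = 1 := by
    have := congrFun (congrFun hpow' 0) 1
    simpa using this
  have hdvd : (n : ℤ) ∣ 1 := ⟨a ^ (n + 1) * b, by linarith [h01]⟩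
  have : (n : ℤ) ≤ 1 := Int.le_of_dvd one_pos hdvd
  omega
end
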